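/- (Zoutendijk-like condition.) Let 0 < ρ < σ < 1 and suppose that for every k ≥ 0: (i) 𝓕^k(x_k, d_k) < 0; (ii) f^{a_{k,j}}(x_{k+1}) − f^{a_{k,j}}(x_k) − ρ·α_k·𝓕^k(x_k, d_k)·e ∈ −K for all j ∈ {1,…,ω_k} (Armijo condition); (iii) 𝓕^k(x_{k+1}, d_k) ≥ σ·𝓕^k(x_k, d_k) (standard Wolfe curvature condition); (iv) F(x_k) ⊆ {f^{a_{k,1}}(x_k), …, f^{a_{k,ω_k}}(x_k)} + K. Then the series ∑_{k≥0} 𝓕^k(x_k, d_k)² / ‖d_k‖² converges. -/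

import Mathlib

open Set Pointwise Filter

/-- `𝓕^a(x, d) = max_{1 ≤ j ≤ ω} ψ_e(∇f^{a_j}(x)ᵀ d)`. -/
noncomputable def Fcal {n m p : ℕ} (ψ : EuclideanSpace ℝ (Fin m) → ℝ)
    (f : Fin p → EuclideanSpace ℝ (Fin n) → EuclideanSpace ℝ (Fin m))
    {ω : ℕ} (hω : 0 < ω) (a : Fin ω → Fin p)
    (x d : EuclideanSpace ℝ (Fin n)) : ℝ :=
  Finset.univ.sup' (Finset.univ_nonempty_iff.mpr ⟨⟨0, hω⟩⟩) fun j =>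
    ψ (fderiv ℝ (f (a j)) x d)

/-- Zoutendijk-like condition: if every step satisfies the
descent condition, the Armijo condition, the standard Wolfe curvature condition
and the domination condition, then `∑_k 𝓕^k(x_k, d_k)² / ‖d_k‖²` converges. -/
theorem statement14 {n m p : ℕ} (K : Set (EuclideanSpace ℝ (Fin m)))
    (hKne : K.Nonempty) (hKclosed : IsClosed K) (hKconv : Convex ℝ K)
    (hKcone : ∀ t : ℝ, 0 ≤ t → ∀ y ∈ K, t • y ∈ K)
    (hKpointed : K ∩ (-K) = {0}) (hKsolid : (interior K).Nonempty)
    (e : EuclideanSpace ℝ (Fin m)) (he : e ∈ interior K)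
    (ψ : EuclideanSpace ℝ (Fin m) → ℝ)
    (hψ : ∀ y, IsLeast {t : ℝ | t • e - y ∈ K} (ψ y))
    (f : Fin p → EuclideanSpace ℝ (Fin n) → EuclideanSpace ℝ (Fin m))
    (hf : ∀ i, ContDiff ℝ 1 (f i))
    (x d : ℕ → EuclideanSpace ℝ (Fin n)) (α : ℕ → ℝ)
    (hα : ∀ k, 0 < α k)
    (hstep : ∀ k, x (k + 1) = x k + α k • d k)
    (ω : ℕ → ℕ) (hω : ∀ k, 0 < ω k) (a : ∀ k, Fin (ω k) → Fin p)
    (L : ℝ) (hL : 0 < L)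
    (S : Set (EuclideanSpace ℝ (Fin n))) (hSopen : IsOpen S) (hSconv : Convex ℝ S)
    (hxS : ∀ k, x k ∈ S)
    (hLip : ∀ i, ∀ v ∈ S, ∀ w ∈ S,
      ‖fderiv ℝ (f i) v - fderiv ℝ (f i) w‖ ≤ L * ‖v - w‖)
    (M : ℝ) (hM : ∀ (i : Fin p) (k : ℕ), M ≤ ψ (f i (x k)))
    (ρ σ : ℝ) (hρ0 : 0 < ρ) (hρσ : ρ < σ) (hσ1 : σ < 1)
    (hdesc : ∀ k, Fcal ψ f (hω k) (a k) (x k) (d k) < 0)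
    (hArmijo : ∀ k, ∀ j : Fin (ω k),
      f (a k j) (x (k + 1)) - f (a k j) (x k)
        - (ρ * α k * Fcal ψ f (hω k) (a k) (x k) (d k)) • e ∈ -K)
    (hWolfe : ∀ k, Fcal ψ f (hω k) (a k) (x (k + 1)) (d k) ≥
      σ * Fcal ψ f (hω k) (a k) (x k) (d k))
    (hdom : ∀ k, Set.range (fun i => f i (x k)) ⊆
      Set.range (fun j => f (a k j) (x k)) + K) :
    Summable fun k => (Fcal ψ f (hω k) (a k) (x k) (d k)) ^ 2 / ‖d k‖ ^ 2 := by
  classical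
  set F : ℕ → ℝ := fun k => Fcal ψ f (hω k) (a k) (x k) (d k) with hF
  -- basic cone facts
  have h0K : (0 : EuclideanSpace ℝ (Fin m)) ∈ K := by
    have : (0 : EuclideanSpace ℝ (Fin m)) ∈ K ∩ (-K) := by rw [hKpointed]; rfl
    exact this.1
  have heK : e ∈ K := interior_subset he
  have hadd : ∀ u ∈ K, ∀ v ∈ K, u + v ∈ K := by
    intro u hu v hv
    have h2 := hKconv hu hv (by norm_num : (0:ℝ) ≤ 1/2) (by norm_num : (0:ℝ) ≤ 1/2)
      (by norm_num)
    have h3 := hKcone 2 (by norm_num) _ h2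
    have : (2:ℝ) • ((1/2 : ℝ) • u + (1/2 : ℝ) • v) = u + v := by
      rw [smul_add, smul_smul, smul_smul]; norm_num
    rwa [this] at h3
  -- e ≠ 0
  have hene : e ≠ 0 := by
    intro h
    have h1 : ψ 0 - 1 ∈ {t : ℝ | t • e - (0 : EuclideanSpace ℝ (Fin m)) ∈ K} := by
      simp [h, h0K]
    have h2 := (hψ 0).2 h1
    linarith
  -- ψ 0 = 0
  have hψ0 : ψ 0 = 0 := by
    have hle : ψ 0 ≤ 0 := (hψ 0).2 (by simp [h0K])
    have hmem : (ψ 0) • e ∈ K := by simpa using (hψ 0).1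
    have hmem2 : (ψ 0) • e ∈ -K := by
      rw [Set.mem_neg]
      have := hKcone (-(ψ 0)) (by linarith) e heK
      rwa [neg_smul] at this
    have : (ψ 0) • e ∈ ({0} : Set (EuclideanSpace ℝ (Fin m))) := by
      rw [← hKpointed]; exact ⟨hmem, hmem2⟩
    rcases smul_eq_zero.mp this with h | h
    · exact h
    · exact absurd h hene
  -- key monotonicity/translation lemma for ψ
  have hkey : ∀ y z : EuclideanSpace ℝ (Fin m), ∀ c : ℝ,
      y + c • e - z ∈ K → ψ z ≤ ψ y + c := by
    intro y z c h
    apply (hψ z).2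
    have h2 := hadd _ (hψ y).1 _ h
    have h3 : (ψ y) • e - y + (y + c • e - z) = (ψ y + c) • e - z := by
      rw [add_smul]; abel
    rwa [h3] at h2
  -- radius of a ball around e inside K
  obtain ⟨δ, hδ, hball⟩ : ∃ δ > 0, Metric.ball e δ ⊆ K := by
    rcases Metric.isOpen_iff.mp isOpen_interior e he with ⟨δ, hδ, hb⟩
    exact ⟨δ, hδ, hb.trans interior_subset⟩
  -- upper Lipschitz-type bound for ψ
  have hub : ∀ w : EuclideanSpace ℝ (Fin m), ψ w ≤ (2/δ) * ‖w‖ := by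
    intro w
    rcases eq_or_ne w 0 with h | h
    · simp [h, hψ0]
    · have hw : 0 < ‖w‖ := norm_pos_iff.mpr h
      have hs : (0:ℝ) < 2 * ‖w‖ / δ := by positivity
      have hmem : e - (δ / (2 * ‖w‖)) • w ∈ Metric.ball e δ := by
        rw [Metric.mem_ball, dist_eq_norm]
        have heq2 : e - (δ / (2 * ‖w‖)) • w - e = -((δ / (2 * ‖w‖)) • w) := by abel
        rw [heq2, norm_neg, norm_smul, Real.norm_eq_abs, abs_of_pos (by positivity)]
        rw [div_mul_eq_mul_div, div_lt_iff₀ (by positivity)]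
        nlinarith [hw, hδ]
      have hmemK := hKcone _ (le_of_lt hs) _ (hball hmem)
      have heq : (2 * ‖w‖ / δ) • (e - (δ / (2 * ‖w‖)) • w)
          = (2 * ‖w‖ / δ) • e - w := by
        rw [smul_sub, smul_smul]
        congr 2
        field_simp
        rw [one_smul]
      rw [heq] at hmemK
      have := (hψ w).2 hmemK
      calc ψ w ≤ 2 * ‖w‖ / δ := this
        _ = (2/δ) * ‖w‖ := by ring
  -- subadditive-type bound
  have hsub : ∀ u v : EuclideanSpace ℝ (Fin m), ψ u ≤ ψ v + (2/δ) * ‖u - v‖ := by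
    intro u v
    have h1 : ψ u ≤ ψ v + ψ (u - v) := by
      apply hkey
      have h0 := (hψ (u - v)).1
      simp only [Set.mem_setOf_eq] at h0
      have heq : v + ψ (u - v) • e - u = ψ (u - v) • e - (u - v) := by abel
      rw [heq]; exact h0
    linarith [hub (u - v)]
  -- d k ≠ 0
  have hd : ∀ k, 0 < ‖d k‖ := by
    intro k
    rcases eq_or_ne (d k) 0 with h | h
    · exfalso
      have := hdesc k
      rw [hF] at *
      unfold Fcal at this
      have h2 : ∀ j : Fin (ω k),
          ψ (fderiv ℝ (f (a k j)) (x k) (d k)) = 0 := by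
        intro j; rw [h]; simp [hψ0]
      have h3 := Finset.le_sup' (b := (⟨0, hω k⟩ : Fin (ω k)))
        (fun j => ψ (fderiv ℝ (f (a k j)) (x k) (d k))) (Finset.mem_univ _)
      rw [h2] at h3
      linarith
    · exact norm_pos_iff.mpr h
  -- step norm
  have hstepnorm : ∀ k, ‖x (k+1) - x k‖ = α k * ‖d k‖ := by
    intro k
    rw [hstep k]
    have : x k + α k • d k - x k = α k • d k := by abel
    rw [this, norm_smul, Real.norm_eq_abs, abs_of_pos (hα k)]
  -- Wolfe + Lipschitz lower bound on step
  have hαlow : ∀ k, (1 - σ) * (-(F k)) ≤ (2/δ) * (L * (α k * ‖d k‖^2)) := by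
    intro k
    have hFd : Fcal ψ f (hω k) (a k) (x (k+1)) (d k)
        ≤ F k + (2/δ) * (L * (α k * ‖d k‖^2)) := by
      rw [hF]
      unfold Fcal
      apply Finset.sup'_le
      intro j _
      have h1 := hsub (fderiv ℝ (f (a k j)) (x (k+1)) (d k))
        (fderiv ℝ (f (a k j)) (x k) (d k))
      have h2 : ψ (fderiv ℝ (f (a k j)) (x k) (d k))
          ≤ Finset.univ.sup' (Finset.univ_nonempty_iff.mpr ⟨⟨0, hω k⟩⟩)
            (fun j => ψ (fderiv ℝ (f (a k j)) (x k) (d k))) :=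
        Finset.le_sup' (fun j' => ψ (fderiv ℝ (f (a k j')) (x k) (d k)))
          (Finset.mem_univ j)
      have h3 : ‖fderiv ℝ (f (a k j)) (x (k+1)) (d k)
          - fderiv ℝ (f (a k j)) (x k) (d k)‖ ≤ L * (α k * ‖d k‖^2) := by
        have h4 : fderiv ℝ (f (a k j)) (x (k+1)) (d k)
            - fderiv ℝ (f (a k j)) (x k) (d k)
            = (fderiv ℝ (f (a k j)) (x (k+1)) - fderiv ℝ (f (a k j)) (x k)) (d k) := by
          simp
        rw [h4]
        calc ‖(fderiv ℝ (f (a k j)) (x (k+1)) - fderiv ℝ (f (a k j)) (x k)) (d k)‖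
            ≤ ‖fderiv ℝ (f (a k j)) (x (k+1)) - fderiv ℝ (f (a k j)) (x k)‖ * ‖d k‖ :=
              ContinuousLinearMap.le_opNorm _ _
          _ ≤ (L * ‖x (k+1) - x k‖) * ‖d k‖ := by
              apply mul_le_mul_of_nonneg_right _ (norm_nonneg _)
              exact hLip _ _ (hxS (k+1)) _ (hxS k)
          _ = L * (α k * ‖d k‖^2) := by rw [hstepnorm k]; ring
      have h5 : (2/δ) * ‖fderiv ℝ (f (a k j)) (x (k+1)) (d k)
          - fderiv ℝ (f (a k j)) (x k) (d k)‖ ≤ (2/δ) * (L * (α k * ‖d k‖^2)) := by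
        apply mul_le_mul_of_nonneg_left h3 (by positivity)
      calc ψ (fderiv ℝ (f (a k j)) (x (k+1)) (d k))
          ≤ ψ (fderiv ℝ (f (a k j)) (x k) (d k)) + (2/δ) * ‖fderiv ℝ (f (a k j)) (x (k+1)) (d k)
              - fderiv ℝ (f (a k j)) (x k) (d k)‖ := h1
        _ ≤ F k + (2/δ) * (L * (α k * ‖d k‖^2)) := by
            simp only [hF]; unfold Fcal; exact add_le_add h2 h5
    have hw := hWolfe k
    nlinarith [hw, hFd]
  -- the min-value sequence
  have hp : (Finset.univ : Finset (Fin p)).Nonempty :=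
    ⟨a 0 ⟨0, hω 0⟩, Finset.mem_univ _⟩
  set μ : ℕ → ℝ := fun k => Finset.univ.inf' hp (fun i => ψ (f i (x k))) with hμ
  have hμM : ∀ k, M ≤ μ k := by
    intro k
    rw [hμ]
    apply Finset.le_inf'
    intro i _
    exact hM i k
  have hμstep : ∀ k, μ (k+1) ≤ μ k + ρ * (α k * F k) := by
    intro k
    obtain ⟨i, _, hi⟩ := Finset.exists_mem_eq_inf' hp (fun i => ψ (f i (x k)))
    have hmemrange : f i (x k) ∈ Set.range (fun i => f i (x k)) := ⟨i, rfl⟩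
    have := hdom k hmemrange
    rw [Set.mem_add] at this
    obtain ⟨u, hu, v, hv, huv⟩ := this
    obtain ⟨j, hj⟩ := hu
    -- ψ (f (a k j) (x k)) ≤ μ k
    have hmono : ψ (f (a k j) (x k)) ≤ μ k := by
      have : f i (x k) + (0:ℝ) • e - f (a k j) (x k) ∈ K := by
        have heq : f i (x k) + (0:ℝ) • e - f (a k j) (x k) = v := by
          rw [← huv, ← hj]; simp
        rw [heq]; exact hv
      have h6 := hkey _ _ _ this
      simp only [hμ]
      rw [hi]
      linarith
    -- Armijo
    have hA := hArmijo k j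
    rw [Set.mem_neg] at hA
    have hA2 : f (a k j) (x k) + (ρ * α k * F k) • e - f (a k j) (x (k+1)) ∈ K := by
      have heq : -(f (a k j) (x (k + 1)) - f (a k j) (x k)
          - (ρ * α k * Fcal ψ f (hω k) (a k) (x k) (d k)) • e)
          = f (a k j) (x k) + (ρ * α k * F k) • e - f (a k j) (x (k+1)) := by
        rw [hF]; abel
      rwa [heq] at hA
    have hA3 := hkey _ _ _ hA2
    have hinf : μ (k+1) ≤ ψ (f (a k j) (x (k+1))) := by
      rw [hμ]
      exact Finset.inf'_le _ (Finset.mem_univ _)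
    calc μ (k+1) ≤ ψ (f (a k j) (x (k+1))) := hinf
      _ ≤ ψ (f (a k j) (x k)) + ρ * α k * F k := hA3
      _ ≤ μ k + ρ * (α k * F k) := by linarith
  -- telescoping bound on partial sums of α k * (-(F k))
  have htel : ∀ N, μ N ≤ μ 0 + ρ * ∑ k ∈ Finset.range N, (α k * F k) := by
    intro N
    induction N with
    | zero => simp
    | succ N ih =>
      have := hμstep N
      rw [Finset.sum_range_succ]
      calc μ (N+1) ≤ μ N + ρ * (α N * F N) := hμstep N
        _ ≤ μ 0 + ρ * ∑ k ∈ Finset.range N, (α k * F k) + ρ * (α N * F N) := by linarith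
        _ = μ 0 + ρ * (∑ k ∈ Finset.range N, (α k * F k) + α N * F N) := by ring
  have hsumbound : ∀ N, ∑ k ∈ Finset.range N, (α k * (-(F k))) ≤ (μ 0 - M)/ρ := by
    intro N
    have h1 := htel N
    have h2 := hμM N
    have h3 : ∑ k ∈ Finset.range N, (α k * (-(F k)))
        = -(∑ k ∈ Finset.range N, (α k * F k)) := by
      rw [← Finset.sum_neg_distrib]
      congr 1; funext k; ring
    rw [h3]
    rw [le_div_iff₀ hρ0]
    nlinarith [h1, h2]
  -- per-term bound
  set C : ℝ := (2/δ) * L / (1 - σ) with hC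
  have h1σ : (0:ℝ) < 1 - σ := by linarith
  have hC0 : 0 < C := by
    rw [hC]; exact div_pos (by positivity) h1σ
  have hterm : ∀ k, F k ^ 2 / ‖d k‖^2 ≤ C * (α k * (-(F k))) := by
    intro k
    have h1 := hαlow k
    have h2 : -(F k) ≤ C * (α k * ‖d k‖^2) := by
      rw [hC, div_mul_eq_mul_div, le_div_iff₀ h1σ]
      nlinarith [h1]
    have hdk := hd k
    rw [div_le_iff₀ (by positivity : (0:ℝ) < ‖d k‖^2)]
    have hFneg : F k < 0 := hdesc k
    nlinarith [mul_le_mul_of_nonneg_right h2 (by linarith : (0:ℝ) ≤ -(F k))]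
  -- conclude summability
  apply summable_of_sum_range_le (c := C * ((μ 0 - M)/ρ))
  · intro k
    positivity
  · intro N
    calc ∑ k ∈ Finset.range N, F k ^ 2 / ‖d k‖^2
        ≤ ∑ k ∈ Finset.range N, C * (α k * (-(F k))) :=
          Finset.sum_le_sum (fun k _ => hterm k)
      _ = C * ∑ k ∈ Finset.range N, (α k * (-(F k))) := by
          rw [Finset.mul_sum]
      _ ≤ C * ((μ 0 - M)/ρ) := by
          apply mul_le_mul_of_nonneg_left (hsumbound N) (le_of_lt hC0)
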